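/- Let n ≥ 1 and let x, x', y, y' ∈ ℝ^{2n} (realized as Fin n ⊕ Fin n → ℝ) satisfy ‖x‖ = ‖x'‖, ‖y‖ = ‖y'‖, x · y = x' · y', and ω(x, y) = ω(x', y'), where ω(v, w) = Σₖ (v(inl k)·w(inr k) − v(inr k)·w(inl k)) is the standard symplectic form. Then there exists a real 2n×2n matrix R that is both orthogonal (RᵀR = 1) and symplectic (RᵀJR = J with J = fromBlocks 0 (−1) 1 0) such that R.mulVec x = x' and R.mulVec y = y'. -/

import Mathlib

open Matrix

noncomputable section
namespace OSAux

open scoped ComplexConjugate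

variable {n : ℕ}

def toC (v : EuclideanSpace ℝ (Fin n ⊕ Fin n)) : EuclideanSpace ℂ (Fin n) :=
  WithLp.toLp 2 (fun k => ⟨v (Sum.inl k), v (Sum.inr k)⟩)

@[simp] lemma toC_re (v : EuclideanSpace ℝ (Fin n ⊕ Fin n)) (k : Fin n) :
    (toC v k).re = v (Sum.inl k) := rfl

@[simp] lemma toC_im (v : EuclideanSpace ℝ (Fin n ⊕ Fin n)) (k : Fin n) :
    (toC v k).im = v (Sum.inr k) := rfl

lemma inner_toC (u v : EuclideanSpace ℝ (Fin n ⊕ Fin n)) :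
    (inner ℂ (toC u) (toC v) : ℂ) =
      Complex.mk (inner ℝ u v)
        (∑ k, (u (Sum.inl k) * v (Sum.inr k) - u (Sum.inr k) * v (Sum.inl k))) := by
  apply Complex.ext
  · simp only [PiLp.inner_apply, RCLike.inner_apply', Complex.re_sum, Complex.mul_re,
      Complex.conj_re, Complex.conj_im, toC]
    simp [Fintype.sum_sum_type, Finset.sum_add_distrib, mul_comm]
  · simp only [PiLp.inner_apply, RCLike.inner_apply', Complex.im_sum, Complex.mul_im,
      Complex.conj_re, Complex.conj_im, toC]
    simp [Finset.sum_sub_distrib, mul_comm, sub_eq_add_neg]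

lemma exists_isometry (z z' w w' : EuclideanSpace ℂ (Fin n))
    (h1 : (inner ℂ z z : ℂ) = inner ℂ z' z') (h2 : (inner ℂ w w : ℂ) = inner ℂ w' w')
    (h3 : (inner ℂ z w : ℂ) = inner ℂ z' w') :
    ∃ L : EuclideanSpace ℂ (Fin n) →ₗᵢ[ℂ] EuclideanSpace ℂ (Fin n), L z = z' ∧ L w = w' := by
  have h3' : (inner ℂ w z : ℂ) = inner ℂ w' z' := by
    have := congrArg (starRingEnd ℂ) h3
    simpa [mul_comm] using this
  let φ : (Fin 2 → ℂ) →ₗ[ℂ] EuclideanSpace ℂ (Fin n) :=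
    (LinearMap.proj 0).smulRight z + (LinearMap.proj 1).smulRight w
  let φ' : (Fin 2 → ℂ) →ₗ[ℂ] EuclideanSpace ℂ (Fin n) :=
    (LinearMap.proj 0).smulRight z' + (LinearMap.proj 1).smulRight w'
  have hφ : ∀ c, φ c = c 0 • z + c 1 • w := fun c => rfl
  have hφ' : ∀ c, φ' c = c 0 • z' + c 1 • w' := fun c => rfl
  have key : ∀ c d, (inner ℂ (φ c) (φ d) : ℂ) = inner ℂ (φ' c) (φ' d) := by
    intro c d
    simp only [hφ, hφ', inner_add_left, inner_add_right, inner_smul_left, inner_smul_right,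
      h1, h2, h3, h3']
  have hker : LinearMap.ker φ ≤ LinearMap.ker φ' := by
    intro c hc
    rw [LinearMap.mem_ker] at hc ⊢
    rw [← inner_self_eq_zero (𝕜 := ℂ), ← key, hc, inner_zero_left]
  let ψ := (LinearMap.ker φ).liftQ φ' hker
  let e := φ.quotKerEquivRange
  let F₀ : LinearMap.range φ →ₗ[ℂ] EuclideanSpace ℂ (Fin n) := ψ.comp e.symm.toLinearMap
  have hF₀ : ∀ c (h : φ c ∈ LinearMap.range φ), F₀ ⟨φ c, h⟩ = φ' c := by
    intro c h
    have he : e.symm ⟨φ c, h⟩ = Submodule.Quotient.mk c := by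
      apply e.injective
      simp [e, LinearMap.quotKerEquivRange_apply_mk]
    simp [F₀, he, ψ, Submodule.liftQ_apply]
  have hFnorm : ∀ s : LinearMap.range φ, ‖F₀ s‖ = ‖s‖ := by
    rintro ⟨s, c, rfl⟩
    rw [hF₀ c (LinearMap.mem_range_self φ c)]
    show ‖φ' c‖ = ‖φ c‖
    rw [@norm_eq_sqrt_re_inner ℂ, @norm_eq_sqrt_re_inner ℂ, key]
  let F : LinearMap.range φ →ₗᵢ[ℂ] EuclideanSpace ℂ (Fin n) := ⟨F₀, hFnorm⟩
  have hz : z ∈ LinearMap.range φ := ⟨![1, 0], by simp [hφ]⟩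
  have hw : w ∈ LinearMap.range φ := ⟨![0, 1], by simp [hφ]⟩
  refine ⟨F.extend, ?_, ?_⟩
  · have h := F.extend_apply ⟨z, hz⟩
    have hz' : (⟨z, hz⟩ : LinearMap.range φ) = ⟨φ ![1, 0], LinearMap.mem_range_self φ _⟩ :=
      Subtype.ext (by simp [hφ])
    rw [show ((⟨z, hz⟩ : LinearMap.range φ) : EuclideanSpace ℂ (Fin n)) = z from rfl] at h
    rw [h, hz']
    show F₀ _ = z'
    rw [hF₀, hφ']
    simp
  · have h := F.extend_apply ⟨w, hw⟩
    have hw' : (⟨w, hw⟩ : LinearMap.range φ) = ⟨φ ![0, 1], LinearMap.mem_range_self φ _⟩ :=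
      Subtype.ext (by simp [hφ])
    rw [show ((⟨w, hw⟩ : LinearMap.range φ) : EuclideanSpace ℂ (Fin n)) = w from rfl] at h
    rw [h, hw']
    show F₀ _ = w'
    rw [hF₀, hφ']
    simp

lemma matrix_rep (L : EuclideanSpace ℂ (Fin n) →ₗᵢ[ℂ] EuclideanSpace ℂ (Fin n))
    (v : EuclideanSpace ℂ (Fin n)) (j : Fin n) :
    L v j = ∑ k, L (EuclideanSpace.single k 1) j * v k := by
  have hv : v = ∑ k, v k • EuclideanSpace.single k (1 : ℂ) := by
    ext i
    have : ∀ k : Fin n, (v k • EuclideanSpace.single k (1 : ℂ)) i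
        = if i = k then v k else 0 := by
      intro k
      simp [EuclideanSpace.single_apply, PiLp.smul_apply]
    rw [show (∑ k, v k • EuclideanSpace.single k (1 : ℂ)) i
        = ∑ k, (v k • EuclideanSpace.single k (1 : ℂ)) i from
      by rw [WithLp.ofLp_sum, Finset.sum_apply]]
    simp [this]
  conv_lhs => rw [hv, map_sum]
  rw [show (∑ k, L (v k • EuclideanSpace.single k (1 : ℂ))) j
      = ∑ k, L (v k • EuclideanSpace.single k (1 : ℂ)) j from
    by rw [WithLp.ofLp_sum, Finset.sum_apply]]
  refine Finset.sum_congr rfl fun k _ => ?_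
  rw [_root_.map_smul]
  simp [PiLp.smul_apply, mul_comm]

lemma unitary_entry (L : EuclideanSpace ℂ (Fin n) →ₗᵢ[ℂ] EuclideanSpace ℂ (Fin n))
    (i k : Fin n) :
    ∑ j, conj (L (EuclideanSpace.single i 1) j) * L (EuclideanSpace.single k 1) j
      = if i = k then 1 else 0 := by
  have h := L.inner_map_map (EuclideanSpace.single i (1:ℂ)) (EuclideanSpace.single k (1:ℂ))
  rw [PiLp.inner_apply] at h
  simp only [RCLike.inner_apply'] at h
  rw [h, EuclideanSpace.inner_single_left]
  simp [EuclideanSpace.single_apply]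

end OSAux
end

/-- If `x, x', y, y' ∈ ℝ^{2n}` have equal norms (`‖x‖ = ‖x'‖`,
`‖y‖ = ‖y'‖`), equal Euclidean inner products (`x⬝y = x'⬝y'`) and equal symplectic
products (`ω(x,y) = ω(x',y')`), then some orthogonal symplectic matrix `R ∈ K(n)`
maps `x` to `x'` and `y` to `y'`. -/
theorem exists_orthogonal_symplectic_map_pair (n : ℕ) (hn : 1 ≤ n)
    (x x' y y' : EuclideanSpace ℝ (Fin n ⊕ Fin n))
    (hx : ‖x‖ = ‖x'‖) (hy : ‖y‖ = ‖y'‖)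
    (hdot : (inner ℝ x y : ℝ) = inner ℝ x' y')
    (hω : ∑ k, (x (Sum.inl k) * y (Sum.inr k) - x (Sum.inr k) * y (Sum.inl k)) =
      ∑ k, (x' (Sum.inl k) * y' (Sum.inr k) - x' (Sum.inr k) * y' (Sum.inl k))) :
    ∃ R : Matrix (Fin n ⊕ Fin n) (Fin n ⊕ Fin n) ℝ,
      Rᵀ * R = 1 ∧
      Rᵀ * (Matrix.fromBlocks (0 : Matrix (Fin n) (Fin n) ℝ) (-1) 1 0) * R =
        Matrix.fromBlocks (0 : Matrix (Fin n) (Fin n) ℝ) (-1) 1 0 ∧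
      R.mulVec x = x' ∧ R.mulVec y = y' := by
  classical
  have hωself : ∀ u : EuclideanSpace ℝ (Fin n ⊕ Fin n),
      ∑ k, (u (Sum.inl k) * u (Sum.inr k) - u (Sum.inr k) * u (Sum.inl k)) = 0 :=
    fun u => Finset.sum_eq_zero fun k _ => by ring
  have h1 : (inner ℂ (OSAux.toC x) (OSAux.toC x) : ℂ) = inner ℂ (OSAux.toC x') (OSAux.toC x') := by
    rw [OSAux.inner_toC, OSAux.inner_toC, hωself, hωself,
      real_inner_self_eq_norm_sq, real_inner_self_eq_norm_sq, hx]
  have h2 : (inner ℂ (OSAux.toC y) (OSAux.toC y) : ℂ) = inner ℂ (OSAux.toC y') (OSAux.toC y') := by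
    rw [OSAux.inner_toC, OSAux.inner_toC, hωself, hωself,
      real_inner_self_eq_norm_sq, real_inner_self_eq_norm_sq, hy]
  have h3 : (inner ℂ (OSAux.toC x) (OSAux.toC y) : ℂ) = inner ℂ (OSAux.toC x') (OSAux.toC y') := by
    rw [OSAux.inner_toC, OSAux.inner_toC, hdot, hω]
  obtain ⟨L, hLx, hLy⟩ := OSAux.exists_isometry _ _ _ _ h1 h2 h3
  set A : Matrix (Fin n) (Fin n) ℝ :=
    Matrix.of fun j k => (L (EuclideanSpace.single k 1) j).re with hAdef
  set B : Matrix (Fin n) (Fin n) ℝ :=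
    Matrix.of fun j k => (L (EuclideanSpace.single k 1) j).im with hBdef
  have hAB1 : Aᵀ * A + Bᵀ * B = 1 := by
    ext i k
    have hu := congrArg Complex.re (OSAux.unitary_entry L i k)
    simp only [Complex.re_sum, Complex.mul_re, Complex.conj_re, Complex.conj_im,
      apply_ite Complex.re, Complex.one_re, Complex.zero_re] at hu
    simp only [Matrix.add_apply, Matrix.mul_apply, Matrix.transpose_apply,
      hAdef, hBdef, Matrix.of_apply, Matrix.one_apply]
    rw [← Finset.sum_add_distrib, ← hu]
    exact Finset.sum_congr rfl fun j _ => by ring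
  have hAB2 : Aᵀ * B = Bᵀ * A := by
    ext i k
    have hu := congrArg Complex.im (OSAux.unitary_entry L i k)
    simp only [Complex.im_sum, Complex.mul_im, Complex.conj_re, Complex.conj_im,
      apply_ite Complex.im, Complex.one_im, Complex.zero_im, ite_self] at hu
    simp only [Matrix.mul_apply, Matrix.transpose_apply, hAdef, hBdef, Matrix.of_apply]
    rw [← sub_eq_zero, ← Finset.sum_sub_distrib, ← hu]
    exact Finset.sum_congr rfl fun j _ => by ring
  have hRtR : (Matrix.fromBlocks A (-B) B A)ᵀ * Matrix.fromBlocks A (-B) B A = 1 := by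
    rw [Matrix.fromBlocks_transpose, Matrix.fromBlocks_multiply]
    rw [show Aᵀ * -B + Bᵀ * A = 0 by rw [Matrix.mul_neg, hAB2]; exact neg_add_cancel _,
      show (-B)ᵀ * A + Aᵀ * B = 0 by
        rw [Matrix.transpose_neg, Matrix.neg_mul, hAB2]; exact neg_add_cancel _,
      show (-B)ᵀ * -B + Aᵀ * A = 1 by
        rw [Matrix.transpose_neg, Matrix.neg_mul, Matrix.mul_neg, neg_neg, add_comm]
        exact hAB1,
      hAB1, Matrix.fromBlocks_one]
  have hmv : ∀ u u' : EuclideanSpace ℝ (Fin n ⊕ Fin n), L (OSAux.toC u) = OSAux.toC u' →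
      (Matrix.fromBlocks A (-B) B A).mulVec u = u' := by
    intro u u' hL
    funext i
    have hj : ∀ j, (∑ k, (L (EuclideanSpace.single k 1) j) * (OSAux.toC u) k)
        = OSAux.toC u' j := by
      intro j; rw [← OSAux.matrix_rep, hL]
    cases i with
    | inl j =>
      have hre := congrArg Complex.re (hj j)
      simp only [Complex.re_sum, Complex.mul_re, OSAux.toC_re, OSAux.toC_im] at hre
      show ∑ i, Matrix.fromBlocks A (-B) B A (Sum.inl j) i * u i = u' (Sum.inl j)
      rw [Fintype.sum_sum_type]
      simp only [Matrix.fromBlocks_apply₁₁, Matrix.fromBlocks_apply₁₂, Matrix.neg_apply,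
        hAdef, hBdef, Matrix.of_apply]
      rw [← hre, ← Finset.sum_add_distrib]
      exact Finset.sum_congr rfl fun k _ => by ring
    | inr j =>
      have him := congrArg Complex.im (hj j)
      simp only [Complex.im_sum, Complex.mul_im, OSAux.toC_re, OSAux.toC_im] at him
      show ∑ i, Matrix.fromBlocks A (-B) B A (Sum.inr j) i * u i = u' (Sum.inr j)
      rw [Fintype.sum_sum_type]
      simp only [Matrix.fromBlocks_apply₂₁, Matrix.fromBlocks_apply₂₂,
        hAdef, hBdef, Matrix.of_apply]
      rw [← him, ← Finset.sum_add_distrib]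
      exact Finset.sum_congr rfl fun k _ => by ring
  refine ⟨Matrix.fromBlocks A (-B) B A, hRtR, ?_, hmv x x' hLx, hmv y y' hLy⟩
  have hJR : (Matrix.fromBlocks (0 : Matrix (Fin n) (Fin n) ℝ) (-1) 1 0) *
      Matrix.fromBlocks A (-B) B A =
      Matrix.fromBlocks A (-B) B A *
      (Matrix.fromBlocks (0 : Matrix (Fin n) (Fin n) ℝ) (-1) 1 0) := by
    rw [Matrix.fromBlocks_multiply, Matrix.fromBlocks_multiply]
    simp
  rw [Matrix.mul_assoc, hJR, ← Matrix.mul_assoc, hRtR, Matrix.one_mul]
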